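/- arXiv:1808.01440 — 5 statements merged into one kernel-verified Lean document; each statement's English description precedes it below -/
import Mathlib

section
/- Let H be a separable Hilbert space and L₁, L₂ bounded operators on H. Then the range of L₁ is contained in the range of L₂ if and only if there exists λ ≥ 0 such that L₁L₁* ≤ λ²L₂L₂* (as positive operators), if and only if there exists a bounded operator X on H with L₁ = L₂X. -/
set_option maxHeartbeats 1000000


open scoped InnerProductSpace
open ContinuousLinearMap (adjoint)

noncomputable def proj {H : Type*} [NormedAddCommGroup H] [InnerProductSpace ℂ H]
    (U : Submodule ℂ H) [U.HasOrthogonalProjection] : H →L[ℂ] H :=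
  U.subtypeL.comp U.orthogonalProjectionOnto

variable {H : Type*} [NormedAddCommGroup H] [InnerProductSpace ℂ H] [CompleteSpace H]
  [TopologicalSpace.SeparableSpace H]

private lemma re_inner_comp_adjoint (L : H →L[ℂ] H) (f : H) :
    RCLike.re (⟪(L ∘L adjoint L) f, f⟫_ℂ) = ‖adjoint L f‖ ^ 2 := by
  have := ContinuousLinearMap.apply_norm_sq_eq_inner_adjoint_left (adjoint L) f
  rw [ContinuousLinearMap.adjoint_adjoint] at this
  exact this.symm

private lemma re_inner_smul_comp_adjoint (r : ℝ) (L : H →L[ℂ] H) (f : H) :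
    RCLike.re (⟪(r • (L ∘L adjoint L)) f, f⟫_ℂ) = r * ‖adjoint L f‖ ^ 2 := by
  rw [ContinuousLinearMap.smul_apply, RCLike.real_smul_eq_coe_smul (K := ℂ),
    inner_smul_left, RCLike.conj_ofReal, RCLike.re_ofReal_mul, re_inner_comp_adjoint]

/-- Range membership criterion via the adjoint. -/
private lemma mem_range_of_bound (L : H →L[ℂ] H) (x : H) (c : ℝ)
    (hb : ∀ y, ‖(⟪x, y⟫_ℂ)‖ ≤ c * ‖adjoint L y‖) : x ∈ LinearMap.range (L : H →ₗ[ℂ] H) := by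
  have key : ∀ y y', adjoint L y = adjoint L y' → ⟪x, y⟫_ℂ = ⟪x, y'⟫_ℂ := by
    intro y y' h
    have hb' := hb (y - y')
    rw [map_sub, h, sub_self, norm_zero, mul_zero] at hb'
    have h0 : ⟪x, y - y'⟫_ℂ = 0 := norm_le_zero_iff.mp hb'
    rwa [inner_sub_right, sub_eq_zero] at h0
  set S := LinearMap.range ((adjoint L : H →L[ℂ] H) : H →ₗ[ℂ] H) with hS
  have hmem : ∀ s : S, ∃ y, adjoint L y = (s : H) := fun s => s.2
  choose Y hY using hmem
  let φ : S →ₗ[ℂ] ℂ :=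
    { toFun := fun s => ⟪x, Y s⟫_ℂ
      map_add' := fun s t => by
        rw [← inner_add_right]
        exact key _ _ (by rw [hY, map_add, hY, hY, Submodule.coe_add])
      map_smul' := fun a s => by
        simp only [RingHom.id_apply, smul_eq_mul]
        rw [← inner_smul_right]
        exact key _ _ (by rw [hY, map_smul, hY, Submodule.coe_smul]) }
  have hφ : ∀ s : S, ‖φ s‖ ≤ max c 0 * ‖s‖ := by
    intro s
    have h1 : ‖φ s‖ ≤ c * ‖adjoint L (Y s)‖ := hb (Y s)
    rw [hY] at h1
    calc ‖φ s‖ ≤ c * ‖(s : H)‖ := h1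
      _ ≤ max c 0 * ‖(s : H)‖ :=
        mul_le_mul_of_nonneg_right (le_max_left _ _) (norm_nonneg _)
      _ = max c 0 * ‖s‖ := rfl
  obtain ⟨g, hg, -⟩ := exists_extension_norm_eq S (LinearMap.mkContinuous φ _ hφ)
  obtain ⟨w, hw⟩ := (InnerProductSpace.toDual ℂ H).surjective g
  refine ⟨w, ?_⟩
  refine ext_inner_right ℂ fun y => ?_
  rw [ContinuousLinearMap.coe_coe, ← ContinuousLinearMap.adjoint_inner_right]
  have h1 : ⟪w, adjoint L y⟫_ℂ = g (adjoint L y) := by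
    rw [← hw]; rfl
  rw [h1]
  have hyS : adjoint L y ∈ S := ⟨y, rfl⟩
  have h2 : g (adjoint L y) = φ ⟨adjoint L y, hyS⟩ := hg ⟨adjoint L y, hyS⟩
  rw [h2]
  exact key _ _ (hY ⟨adjoint L y, hyS⟩)

theorem douglas_factorization (L₁ L₂ : H →L[ℂ] H) :
    List.TFAE
      [LinearMap.range (L₁ : H →ₗ[ℂ] H) ≤ LinearMap.range (L₂ : H →ₗ[ℂ] H),
       ∃ l : ℝ, 0 ≤ l ∧
         (l ^ 2 • (L₂ ∘L adjoint L₂) - L₁ ∘L adjoint L₁).IsPositive,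
       ∃ X : H →L[ℂ] H, L₁ = L₂ ∘L X] := by
  tfae_have 1 → 3 := by
    intro h
    classical
    set K := LinearMap.ker (L₂ : H →ₗ[ℂ] H) with hK
    have hpick : ∀ x : H, ∃ w, L₂ w = L₁ x := fun x => h ⟨x, rfl⟩
    choose W hW using hpick
    -- the component of W x in Kᗮ
    let T0 : H → H := fun x => W x - (K.orthogonalProjectionOnto (W x) : H)
    have hT0mem : ∀ x, T0 x ∈ Kᗮ := fun x =>
      Submodule.sub_starProjection_mem_orthogonal (K := K) (W x)
    have hT0 : ∀ x, L₂ (T0 x) = L₁ x := by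
      intro x
      have hker : L₂ ((K.orthogonalProjectionOnto (W x) : H)) = 0 :=
        (K.orthogonalProjectionOnto (W x)).2
      rw [map_sub, hker, sub_zero, hW]
    have uniq : ∀ g g' : H, g ∈ Kᗮ → g' ∈ Kᗮ → L₂ g = L₂ g' → g = g' := by
      intro g g' hg hg' hL
      have hmemK : g - g' ∈ K := by
        simp only [hK, LinearMap.mem_ker, ContinuousLinearMap.coe_coe, map_sub, hL, sub_self]
      have hmemKo : g - g' ∈ Kᗮ := Kᗮ.sub_mem hg hg'
      have := (Submodule.orthogonal_disjoint K).le_bot ⟨hmemK, hmemKo⟩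
      rwa [Submodule.mem_bot, sub_eq_zero] at this
    let T : H →ₗ[ℂ] H :=
      { toFun := T0
        map_add' := fun x y =>
          uniq _ _ (hT0mem _) (Kᗮ.add_mem (hT0mem x) (hT0mem y))
            (show L₂ (T0 (x + y)) = L₂ (T0 x + T0 y) by
              rw [hT0, map_add, map_add, hT0, hT0])
        map_smul' := fun a x =>
          uniq _ _ (hT0mem _) (Kᗮ.smul_mem a (hT0mem x))
            (show L₂ (T0 (a • x)) = L₂ (a • T0 x) by
              rw [hT0, map_smul, map_smul, hT0]) }
    have hcont : Continuous T := by
      apply LinearMap.continuous_of_seq_closed_graph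
      intro u x y hu hTu
      have h1 : Filter.Tendsto (fun n => L₂ (T (u n))) Filter.atTop (nhds (L₂ y)) :=
        (L₂.continuous.tendsto y).comp hTu
      have h2 : Filter.Tendsto (fun n => L₂ (T (u n))) Filter.atTop (nhds (L₁ x)) := by
        have : (fun n => L₂ (T (u n))) = fun n => L₁ (u n) := funext fun n => hT0 (u n)
        rw [this]
        exact (L₁.continuous.tendsto x).comp hu
      have hL : L₂ y = L₁ x := tendsto_nhds_unique h1 h2
      have hyK : y ∈ Kᗮ := by
        have hcl : IsClosed (Kᗮ : Set H) := Submodule.isClosed_orthogonal K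
        exact hcl.mem_of_tendsto hTu (Filter.Eventually.of_forall fun n => hT0mem (u n))
      exact uniq y (T x) hyK (hT0mem x) (by rw [hL]; exact (hT0 x).symm)
    exact ⟨⟨T, hcont⟩, by ext x; exact (hT0 x).symm⟩
  tfae_have 3 → 2 := by
    rintro ⟨X, rfl⟩
    refine ⟨‖X‖, norm_nonneg X, ?_, ?_⟩
    · -- self-adjointness
      have h2 : IsSelfAdjoint ((L₂ ∘L X) ∘L adjoint (L₂ ∘L X)) :=
        ContinuousLinearMap.isSelfAdjoint_iff'.mpr (by
          rw [ContinuousLinearMap.adjoint_comp, ContinuousLinearMap.adjoint_adjoint])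
      have h3 : IsSelfAdjoint (L₂ ∘L adjoint L₂) :=
        ContinuousLinearMap.isSelfAdjoint_iff'.mpr (by
          rw [ContinuousLinearMap.adjoint_comp, ContinuousLinearMap.adjoint_adjoint])
      have h4 : IsSelfAdjoint ((‖X‖ ^ 2 : ℝ) • (L₂ ∘L adjoint L₂)) := by
        rw [RCLike.real_smul_eq_coe_smul (K := ℂ)]
        unfold IsSelfAdjoint
        rw [star_smul, h3.star_eq, RCLike.star_def, RCLike.conj_ofReal]
      exact ContinuousLinearMap.isSelfAdjoint_iff_isSymmetric.mp (h4.sub h2)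
    · intro f
      have hle : ‖adjoint (L₂ ∘L X) f‖ ≤ ‖X‖ * ‖adjoint L₂ f‖ := by
        rw [ContinuousLinearMap.adjoint_comp]
        calc ‖(adjoint X ∘L adjoint L₂) f‖ = ‖adjoint X (adjoint L₂ f)‖ := rfl
          _ ≤ ‖adjoint X‖ * ‖adjoint L₂ f‖ := (adjoint X).le_opNorm _
          _ = ‖X‖ * ‖adjoint L₂ f‖ := by
              rw [ContinuousLinearMap.adjoint.norm_map]
      have hsq : ‖adjoint (L₂ ∘L X) f‖ ^ 2 ≤ ‖X‖ ^ 2 * ‖adjoint L₂ f‖ ^ 2 := by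
        rw [← mul_pow]
        exact pow_le_pow_left₀ (norm_nonneg _) hle 2
      have hre : (‖X‖ ^ 2 • (L₂ ∘L adjoint L₂) - (L₂ ∘L X) ∘L adjoint (L₂ ∘L X)).reApplyInnerSelf f
          = ‖X‖ ^ 2 * ‖adjoint L₂ f‖ ^ 2 - ‖adjoint (L₂ ∘L X) f‖ ^ 2 := by
        rw [ContinuousLinearMap.reApplyInnerSelf, ContinuousLinearMap.sub_apply,
          inner_sub_left, map_sub, re_inner_smul_comp_adjoint, re_inner_comp_adjoint]
      rw [hre]
      linarith
  tfae_have 2 → 1 := by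
    rintro ⟨l, hl, hsa, hpos⟩ x ⟨u, rfl⟩
    have hnorm : ∀ f, ‖adjoint L₁ f‖ ≤ l * ‖adjoint L₂ f‖ := by
      intro f
      have h0 := hpos f
      rw [ContinuousLinearMap.reApplyInnerSelf, ContinuousLinearMap.sub_apply,
        inner_sub_left, map_sub, re_inner_smul_comp_adjoint, re_inner_comp_adjoint] at h0
      have h0' : 0 ≤ l ^ 2 * ‖adjoint L₂ f‖ ^ 2 - ‖adjoint L₁ f‖ ^ 2 := h0
      have hsq : ‖adjoint L₁ f‖ ^ 2 ≤ (l * ‖adjoint L₂ f‖) ^ 2 := by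
        rw [mul_pow]; linarith
      have := Real.sqrt_le_sqrt hsq
      rwa [Real.sqrt_sq (norm_nonneg _),
        Real.sqrt_sq (mul_nonneg hl (norm_nonneg _))] at this
    apply mem_range_of_bound L₂ _ (‖u‖ * l)
    intro y
    rw [ContinuousLinearMap.coe_coe, ← ContinuousLinearMap.adjoint_inner_right]
    calc ‖⟪u, adjoint L₁ y⟫_ℂ‖ ≤ ‖u‖ * ‖adjoint L₁ y‖ := norm_inner_le_norm _ _
      _ ≤ ‖u‖ * (l * ‖adjoint L₂ y‖) :=
          mul_le_mul_of_nonneg_left (hnorm y) (norm_nonneg u)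
      _ = ‖u‖ * l * ‖adjoint L₂ y‖ := (mul_assoc _ _ _).symm
  tfae_finish
end

section
/- Let {f_i}_{i∈I} be a K-frame for a Hilbert space H with bounds A, B, where K ∈ B(H) has closed range. Then the frame operator S_F, defined by S_F f = Σ_{i∈I} ⟨f, f_i⟩ f_i, restricted to R(K), is an injective map onto S_F(R(K)), and its inverse S_F^{-1}: S_F(R(K)) → R(K) satisfies B^{-1}‖f‖ ≤ ‖S_F^{-1} f‖ ≤ A^{-1}‖K†‖²‖f‖ for all f ∈ S_F(R(K)), where K† is the pseudo-inverse of K. -/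
open scoped InnerProductSpace
open ContinuousLinearMap (adjoint)

variable {H : Type*} [NormedAddCommGroup H] [InnerProductSpace ℂ H] [CompleteSpace H]
  [TopologicalSpace.SeparableSpace H]

lemma summable_mul_of_sq {ι : Type*} {a b : ι → ℝ} (h0a : ∀ i, 0 ≤ a i) (h0b : ∀ i, 0 ≤ b i)
    (ha : Summable fun i => a i ^ 2) (hb : Summable fun i => b i ^ 2) :
    Summable fun i => a i * b i := by
  refine Summable.of_nonneg_of_le (fun i => mul_nonneg (h0a i) (h0b i)) (fun i => ?_) (ha.add hb)
  nlinarith [sq_nonneg (a i - b i)]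

lemma tsum_cs {ι : Type*} {a b : ι → ℝ} (h0a : ∀ i, 0 ≤ a i) (h0b : ∀ i, 0 ≤ b i)
    (ha : Summable fun i => a i ^ 2) (hb : Summable fun i => b i ^ 2) :
    ∑' i, a i * b i ≤ Real.sqrt (∑' i, a i ^ 2) * Real.sqrt (∑' i, b i ^ 2) := by
  refine Summable.tsum_le_of_sum_le (summable_mul_of_sq h0a h0b ha hb) (fun s => ?_)
  refine (Real.sum_mul_le_sqrt_mul_sqrt s a b).trans ?_
  exact mul_le_mul (Real.sqrt_le_sqrt (Summable.sum_le_tsum s (fun i _ => sq_nonneg _) ha))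
    (Real.sqrt_le_sqrt (Summable.sum_le_tsum s (fun i _ => sq_nonneg _) hb))
    (Real.sqrt_nonneg _) (Real.sqrt_nonneg _)

theorem kframe_frame_operator_inverse_bounds {ι : Type*} [Countable ι]
    (K Kd S : H →L[ℂ] H) (F : ι → H) (A B : ℝ) (hA : 0 < A) (hB : 0 < B)
    (hframe : ∀ f : H, A * ‖adjoint K f‖ ^ 2 ≤ ∑' i, ‖⟪ F i, f ⟫_ℂ‖ ^ 2 ∧
      ∑' i, ‖⟪ F i, f ⟫_ℂ‖ ^ 2 ≤ B * ‖f‖ ^ 2)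
    (hKclosed : IsClosed (LinearMap.range (K : H →ₗ[ℂ] H) : Set H))
    (h1 : K ∘L Kd ∘L K = K) (h2 : Kd ∘L K ∘L Kd = Kd)
    (h3 : adjoint (K ∘L Kd) = K ∘L Kd) (h4 : adjoint (Kd ∘L K) = Kd ∘L K)
    (hS : ∀ f : H, HasSum (fun i => ⟪ F i, f ⟫_ℂ • F i) (S f)) :
    Set.InjOn S (LinearMap.range (K : H →ₗ[ℂ] H) : Set H) ∧
      ∀ f ∈ LinearMap.range (K : H →ₗ[ℂ] H), B⁻¹ * ‖S f‖ ≤ ‖f‖ ∧ ‖f‖ ≤ A⁻¹ * ‖Kd‖ ^ 2 * ‖S f‖ := by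
  have hsum : ∀ f g : H, HasSum (fun i => ⟪F i, f⟫_ℂ * ⟪g, F i⟫_ℂ) ⟪g, S f⟫_ℂ := by
    intro f g
    have := (hS f).mapL (innerSL ℂ g)
    simpa [inner_smul_right] using this
  have hre : ∀ f : H, HasSum (fun i => ‖⟪F i, f⟫_ℂ‖ ^ 2) (⟪f, S f⟫_ℂ).re := by
    intro f
    have h := (hsum f f).mapL Complex.reCLM
    have heq : ∀ i, (⟪F i, f⟫_ℂ * ⟪f, F i⟫_ℂ).re = ‖⟪F i, f⟫_ℂ‖ ^ 2 := by
      intro i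
      rw [← inner_conj_symm f (F i), Complex.mul_conj]
      simp [Complex.normSq_eq_norm_sq, ← Complex.ofReal_pow]
    simp only [Complex.reCLM_apply] at h
    exact (funext heq : (fun i => (⟪F i, f⟫_ℂ * ⟪f, F i⟫_ℂ).re) = _) ▸ h
  have hts : ∀ f : H, ∑' i, ‖⟪F i, f⟫_ℂ‖ ^ 2 = (⟪f, S f⟫_ℂ).re := fun f => (hre f).tsum_eq
  -- upper bound on S
  have hSB : ∀ f : H, ‖S f‖ ≤ B * ‖f‖ := by
    intro f
    rcases eq_or_ne (S f) 0 with hz | hz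
    · simp [hz]; positivity
    have hnpos : 0 < ‖S f‖ := norm_pos_iff.mpr hz
    have hsq : ‖S f‖ ^ 2 = (⟪S f, S f⟫_ℂ).re := (inner_self_eq_norm_sq (𝕜 := ℂ) (S f)).symm
    have h2' := hsum f (S f)
    have hsumm : Summable fun i => ‖⟪F i, f⟫_ℂ‖ * ‖⟪F i, S f⟫_ℂ‖ :=
      summable_mul_of_sq (fun i => norm_nonneg _) (fun i => norm_nonneg _)
        (hre f).summable (hre (S f)).summable
    have hnorm : ‖⟪S f, S f⟫_ℂ‖ ≤ ∑' i, ‖⟪F i, f⟫_ℂ‖ * ‖⟪F i, S f⟫_ℂ‖ := by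
      rw [← h2'.tsum_eq]
      refine (norm_tsum_le_tsum_norm ?_).trans_eq ?_
      · refine hsumm.congr fun i => ?_
        rw [norm_mul, norm_inner_symm (S f) (F i)]
      · exact tsum_congr fun i => by rw [norm_mul, norm_inner_symm (S f) (F i)]
    have hcs := tsum_cs (fun i => norm_nonneg (⟪F i, f⟫_ℂ)) (fun i => norm_nonneg (⟪F i, S f⟫_ℂ))
      (hre f).summable (hre (S f)).summable
    have hb1 : Real.sqrt (∑' i, ‖⟪F i, f⟫_ℂ‖ ^ 2) ≤ Real.sqrt (B * ‖f‖ ^ 2) :=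
      Real.sqrt_le_sqrt (hframe f).2
    have hb2 : Real.sqrt (∑' i, ‖⟪F i, S f⟫_ℂ‖ ^ 2) ≤ Real.sqrt (B * ‖S f‖ ^ 2) :=
      Real.sqrt_le_sqrt (hframe (S f)).2
    have hkey : ‖S f‖ ^ 2 ≤ B * ‖f‖ * ‖S f‖ := by
      have hre_le : (⟪S f, S f⟫_ℂ).re ≤ ‖⟪S f, S f⟫_ℂ‖ := Complex.re_le_norm _
      have hsqrt : Real.sqrt (B * ‖f‖ ^ 2) * Real.sqrt (B * ‖S f‖ ^ 2) = B * ‖f‖ * ‖S f‖ := by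
        rw [← Real.sqrt_mul (by positivity)]
        rw [show B * ‖f‖ ^ 2 * (B * ‖S f‖ ^ 2) = (B * ‖f‖ * ‖S f‖) ^ 2 by ring]
        exact Real.sqrt_sq (by positivity)
      calc ‖S f‖ ^ 2 = (⟪S f, S f⟫_ℂ).re := hsq
        _ ≤ ‖⟪S f, S f⟫_ℂ‖ := hre_le
        _ ≤ ∑' i, ‖⟪F i, f⟫_ℂ‖ * ‖⟪F i, S f⟫_ℂ‖ := hnorm
        _ ≤ _ := hcs
        _ ≤ Real.sqrt (B * ‖f‖ ^ 2) * Real.sqrt (B * ‖S f‖ ^ 2) :=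
            mul_le_mul hb1 hb2 (Real.sqrt_nonneg _) (Real.sqrt_nonneg _)
        _ = B * ‖f‖ * ‖S f‖ := hsqrt
    nlinarith
  -- lower bound on range K
  have hlow : ∀ f ∈ LinearMap.range (K : H →ₗ[ℂ] H), ‖f‖ ≤ A⁻¹ * ‖Kd‖ ^ 2 * ‖S f‖ := by
    rintro f ⟨h, rfl⟩
    change ‖K h‖ ≤ A⁻¹ * ‖Kd‖ ^ 2 * ‖S (K h)‖
    set f := K h with hf
    have hKKd : K (Kd f) = f := by
      have := ContinuousLinearMap.ext_iff.mp h1 h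
      simpa using this
    have hfadj : adjoint Kd (adjoint K f) = f := by
      have h3' := ContinuousLinearMap.ext_iff.mp h3 f
      rw [ContinuousLinearMap.adjoint_comp] at h3'
      simpa [hKKd] using h3'
    have hnf : ‖f‖ ≤ ‖Kd‖ * ‖adjoint K f‖ := by
      calc ‖f‖ = ‖adjoint Kd (adjoint K f)‖ := by rw [hfadj]
        _ ≤ ‖adjoint Kd‖ * ‖adjoint K f‖ := (adjoint Kd).le_opNorm _
        _ = ‖Kd‖ * ‖adjoint K f‖ := by
            rw [LinearIsometryEquiv.norm_map ContinuousLinearMap.adjoint Kd]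
    have hAf : A * ‖adjoint K f‖ ^ 2 ≤ ‖f‖ * ‖S f‖ := by
      refine (hframe f).1.trans ?_
      rw [hts]
      exact (RCLike.abs_re_le_norm ⟪f, S f⟫_ℂ).trans' (le_abs_self _) |>.trans
        (norm_inner_le_norm f (S f))
    rcases eq_or_ne f 0 with hz | hz
    · simp [hz]
    have hfpos : 0 < ‖f‖ := norm_pos_iff.mpr hz
    have hsq2 : ‖f‖ ^ 2 ≤ (‖Kd‖ * ‖adjoint K f‖) ^ 2 := pow_le_pow_left₀ (norm_nonneg f) hnf 2
    have h5 : A * ‖f‖ ^ 2 ≤ ‖Kd‖ ^ 2 * (‖f‖ * ‖S f‖) := by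
      calc A * ‖f‖ ^ 2 ≤ A * (‖Kd‖ * ‖adjoint K f‖) ^ 2 :=
            mul_le_mul_of_nonneg_left hsq2 hA.le
        _ = ‖Kd‖ ^ 2 * (A * ‖adjoint K f‖ ^ 2) := by ring
        _ ≤ ‖Kd‖ ^ 2 * (‖f‖ * ‖S f‖) := mul_le_mul_of_nonneg_left hAf (sq_nonneg _)
    rw [show A⁻¹ * ‖Kd‖ ^ 2 * ‖S f‖ = ‖Kd‖ ^ 2 * ‖S f‖ / A by ring]
    rw [le_div_iff₀ hA]
    nlinarith [hfpos]
  constructor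
  · rintro f hf g hg hfg
    have hsub : f - g ∈ LinearMap.range (K : H →ₗ[ℂ] H) := Submodule.sub_mem _ hf hg
    have := hlow (f - g) hsub
    rw [map_sub, hfg, sub_self, norm_zero, mul_zero] at this
    have : ‖f - g‖ = 0 := le_antisymm this (norm_nonneg _)
    rwa [norm_sub_eq_zero_iff] at this
  · intro f hf
    refine ⟨?_, hlow f hf⟩
    rw [inv_mul_le_iff₀ hB]
    exact hSB f
end

section
/- Let {W_i}_{i∈I} be closed subspaces of H with weights ω_i > 0, and for each i let {f_{ij}}_{j∈J_i} be a frame for W_i with bounds A_i, B_i satisfying 0 < inf_i A_i ≤ sup_i B_i < ∞. Then {ω_i f_{ij}}_{i∈I, j∈J_i} is a K-frame for H if and only if {(W_i, ω_i)}_{i∈I} is a K-fusion frame for H. -/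
open scoped InnerProductSpace
open ContinuousLinearMap (adjoint)

variable {H : Type*} [NormedAddCommGroup H] [InnerProductSpace ℂ H] [CompleteSpace H]
  [TopologicalSpace.SeparableSpace H]

set_option linter.unusedSectionVars false in
theorem aux_sandwich {ι : Type*}
    {J : ι → Type*}
    (W : ι → Submodule ℂ H) [∀ i, CompleteSpace (W i)]
    (ω : ι → ℝ)
    (F : ∀ i, J i → H) (hmem : ∀ i j, F i j ∈ W i)
    (A B : ι → ℝ) (A₀ B₀ : ℝ) (hA₀ : 0 < A₀)
    (hA : ∀ i, A₀ ≤ A i) (hB : ∀ i, B i ≤ B₀)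
    (hlocal : ∀ i, ∀ g ∈ W i,
      A i * ‖g‖ ^ 2 ≤ ∑' j, ‖⟪ F i j, g ⟫_ℂ‖ ^ 2 ∧
      ∑' j, ‖⟪ F i j, g ⟫_ℂ‖ ^ 2 ≤ B i * ‖g‖ ^ 2) (g : H) :
    A₀ * ∑' i, ω i ^ 2 * ‖proj (W i) g‖ ^ 2 ≤
        ∑' p : (Σ i, J i), ‖⟪ ω p.1 • F p.1 p.2, g ⟫_ℂ‖ ^ 2 ∧
      ∑' p : (Σ i, J i), ‖⟪ ω p.1 • F p.1 p.2, g ⟫_ℂ‖ ^ 2 ≤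
        B₀ * ∑' i, ω i ^ 2 * ‖proj (W i) g‖ ^ 2 := by
  have hvmem : ∀ i, proj (W i) g ∈ W i := fun i => SetLike.coe_mem _
  have hinner : ∀ i (j : J i), ⟪ F i j, g ⟫_ℂ = ⟪ F i j, proj (W i) g ⟫_ℂ := by
    intro i j
    rw [← sub_eq_zero, ← inner_sub_right]
    exact (Submodule.mem_orthogonal (W i) _).1
      (Submodule.sub_starProjection_mem_orthogonal (K := W i) g) _ (hmem i j)
  obtain ⟨a, ha⟩ : ∃ a : ∀ i, J i → ℝ,
      a = fun i j => ‖⟪ F i j, proj (W i) g ⟫_ℂ‖ ^ 2 := ⟨_, rfl⟩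
  obtain ⟨c, hc⟩ : ∃ c : (Σ i, J i) → ℝ,
      c = fun p => ω p.1 ^ 2 * a p.1 p.2 := ⟨_, rfl⟩
  obtain ⟨s, hs⟩ : ∃ s : ι → ℝ,
      s = fun i => ω i ^ 2 * ‖proj (W i) g‖ ^ 2 := ⟨_, rfl⟩
  have e1 : (∑' p : (Σ i, J i), ‖⟪ ω p.1 • F p.1 p.2, g ⟫_ℂ‖ ^ 2) = ∑' p, c p := by
    refine tsum_congr fun p => ?_
    rw [RCLike.real_smul_eq_coe_smul (K := ℂ), inner_smul_left, hinner p.1 p.2]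
    simp only [hc, ha, norm_mul, mul_pow, RCLike.norm_conj]
    norm_num [Complex.norm_real, sq_abs]
  have e2 : (∑' i, ω i ^ 2 * ‖proj (W i) g‖ ^ 2) = ∑' i, s i :=
    tsum_congr fun i => by rw [hs]
  rw [e1, e2]
  have ha_nonneg : ∀ i j, 0 ≤ a i j := by intro i j; simp only [ha]; positivity
  have hs_nonneg : ∀ i, 0 ≤ s i := by intro i; simp only [hs]; positivity
  have hc_nonneg : ∀ p, 0 ≤ c p := by
    intro p
    have := ha_nonneg p.1 p.2
    simp only [hc]
    positivity
  have hloc : ∀ i, A i * ‖proj (W i) g‖ ^ 2 ≤ ∑' j, a i j ∧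
      (∑' j, a i j) ≤ B i * ‖proj (W i) g‖ ^ 2 := by
    intro i
    simp only [ha]
    exact hlocal i _ (hvmem i)
  have ha_sum : ∀ i, Summable (a i) := by
    intro i
    rcases eq_or_ne (proj (W i) g) 0 with hv0 | hv0
    · have hz : a i = fun _ => (0 : ℝ) := by
        funext j
        simp [ha, hv0]
      rw [hz]
      exact summable_zero
    · by_contra h
      have h0 : ∑' j, a i j = 0 := tsum_eq_zero_of_not_summable h
      have h1 : A i * ‖proj (W i) g‖ ^ 2 ≤ 0 := h0 ▸ (hloc i).1
      have hApos : 0 < A i := lt_of_lt_of_le hA₀ (hA i)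
      have h2 : 0 < ‖proj (W i) g‖ := norm_pos_iff.mpr hv0
      have h3 : 0 < ‖proj (W i) g‖ ^ 2 := by positivity
      nlinarith
  have hcfib : ∀ i, Summable fun j => c ⟨i, j⟩ := by
    intro i
    simp only [hc]
    exact (ha_sum i).mul_left _
  have hcfib_eq : ∀ i, (∑' j, c ⟨i, j⟩) = ω i ^ 2 * ∑' j, a i j := by
    intro i
    simp only [hc]
    exact tsum_mul_left
  have ht_lower : ∀ i, A₀ * s i ≤ ω i ^ 2 * ∑' j, a i j := by
    intro i
    have h1 := (hloc i).1
    have h2 := hA i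
    have h3 : (0:ℝ) ≤ ω i ^ 2 := sq_nonneg _
    have h4 : (0:ℝ) ≤ ‖proj (W i) g‖ ^ 2 := by positivity
    simp only [hs]
    nlinarith [mul_le_mul_of_nonneg_left h1 h3,
      mul_le_mul_of_nonneg_left (mul_le_mul_of_nonneg_right h2 h4) h3]
  have ht_upper : ∀ i, ω i ^ 2 * ∑' j, a i j ≤ B₀ * s i := by
    intro i
    have h1 := (hloc i).2
    have h2 := hB i
    have h3 : (0:ℝ) ≤ ω i ^ 2 := sq_nonneg _
    have h4 : (0:ℝ) ≤ ‖proj (W i) g‖ ^ 2 := by positivity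
    simp only [hs]
    nlinarith [mul_le_mul_of_nonneg_left h1 h3,
      mul_le_mul_of_nonneg_left (mul_le_mul_of_nonneg_right h2 h4) h3]
  by_cases hS : Summable s
  · have ht_sum : Summable fun i => ω i ^ 2 * ∑' j, a i j := by
      refine Summable.of_nonneg_of_le (fun i => ?_) ht_upper (hS.mul_left B₀)
      have : (0:ℝ) ≤ ∑' j, a i j := tsum_nonneg (ha_nonneg i)
      positivity
    have hc_sum : Summable c := by
      rw [summable_sigma_of_nonneg hc_nonneg]
      exact ⟨hcfib, by simpa only [hcfib_eq] using ht_sum⟩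
    have hc_tsum : (∑' p, c p) = ∑' i, ω i ^ 2 * ∑' j, a i j := by
      rw [Summable.tsum_sigma' hcfib hc_sum]
      exact tsum_congr hcfib_eq
    constructor
    · calc A₀ * ∑' i, s i = ∑' i, A₀ * s i := tsum_mul_left.symm
        _ ≤ ∑' i, ω i ^ 2 * ∑' j, a i j := Summable.tsum_le_tsum ht_lower (hS.mul_left A₀) ht_sum
        _ = ∑' p, c p := hc_tsum.symm
    · calc (∑' p, c p) = ∑' i, ω i ^ 2 * ∑' j, a i j := hc_tsum
        _ ≤ ∑' i, B₀ * s i := Summable.tsum_le_tsum ht_upper ht_sum (hS.mul_left B₀)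
        _ = B₀ * ∑' i, s i := tsum_mul_left
  · have hc_not : ¬ Summable c := by
      intro hc_sum
      have hsplit := (summable_sigma_of_nonneg hc_nonneg).mp hc_sum
      have ht_sum : Summable fun i => ω i ^ 2 * ∑' j, a i j := by
        simpa only [hcfib_eq] using hsplit.2
      refine hS ?_
      refine Summable.of_nonneg_of_le hs_nonneg (fun i => ?_) (ht_sum.div_const A₀)
      have := ht_lower i
      rw [le_div_iff₀ hA₀]
      linarith
    rw [tsum_eq_zero_of_not_summable hc_not, tsum_eq_zero_of_not_summable hS]
    simp

theorem local_frames_K_frame_iff_K_fusion_frame {ι : Type*} [Countable ι]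
    {J : ι → Type*} [∀ i, Countable (J i)]
    (K : H →L[ℂ] H) (W : ι → Submodule ℂ H) [∀ i, CompleteSpace (W i)]
    (ω : ι → ℝ) (hω : ∀ i, 0 < ω i)
    (F : ∀ i, J i → H) (hmem : ∀ i j, F i j ∈ W i)
    (A B : ι → ℝ) (A₀ B₀ : ℝ) (hA₀ : 0 < A₀) (hAB : A₀ ≤ B₀)
    (hA : ∀ i, A₀ ≤ A i) (hB : ∀ i, B i ≤ B₀)
    (hlocal : ∀ i, ∀ g ∈ W i,
      A i * ‖g‖ ^ 2 ≤ ∑' j, ‖⟪ F i j, g ⟫_ℂ‖ ^ 2 ∧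
      ∑' j, ‖⟪ F i j, g ⟫_ℂ‖ ^ 2 ≤ B i * ‖g‖ ^ 2) :
    (∃ C D : ℝ, 0 < C ∧ 0 < D ∧ ∀ g : H,
        C * ‖adjoint K g‖ ^ 2 ≤ ∑' p : (Σ i, J i), ‖⟪ ω p.1 • F p.1 p.2, g ⟫_ℂ‖ ^ 2 ∧
        ∑' p : (Σ i, J i), ‖⟪ ω p.1 • F p.1 p.2, g ⟫_ℂ‖ ^ 2 ≤ D * ‖g‖ ^ 2) ↔
      (∃ C D : ℝ, 0 < C ∧ 0 < D ∧ ∀ g : H,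
        C * ‖adjoint K g‖ ^ 2 ≤ ∑' i, ω i ^ 2 * ‖proj (W i) g‖ ^ 2 ∧
        ∑' i, ω i ^ 2 * ‖proj (W i) g‖ ^ 2 ≤ D * ‖g‖ ^ 2) := by
  have hB₀ : 0 < B₀ := lt_of_lt_of_le hA₀ hAB
  have key := aux_sandwich W ω F hmem A B A₀ B₀ hA₀ hA hB hlocal
  constructor
  · rintro ⟨C, D, hC, hD, h⟩
    refine ⟨C / B₀, D / A₀, by positivity, by positivity, fun g => ?_⟩
    obtain ⟨h1, h2⟩ := key g
    obtain ⟨h3, h4⟩ := h g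
    constructor
    · rw [div_mul_eq_mul_div, div_le_iff₀ hB₀]
      linarith
    · rw [div_mul_eq_mul_div, le_div_iff₀ hA₀]
      linarith
  · rintro ⟨C, D, hC, hD, h⟩
    refine ⟨A₀ * C, B₀ * D, by positivity, by positivity, fun g => ?_⟩
    obtain ⟨h1, h2⟩ := key g
    obtain ⟨h3, h4⟩ := h g
    have l1 := mul_le_mul_of_nonneg_left h3 hA₀.le
    have l2 := mul_le_mul_of_nonneg_left h4 hB₀.le
    constructor
    · calc A₀ * C * ‖adjoint K g‖ ^ 2 ≤ A₀ * ∑' i, ω i ^ 2 * ‖proj (W i) g‖ ^ 2 := by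
            rw [mul_assoc]; exact l1
        _ ≤ _ := h1
    · calc (∑' p : (Σ i, J i), ‖⟪ ω p.1 • F p.1 p.2, g ⟫_ℂ‖ ^ 2)
          ≤ B₀ * ∑' i, ω i ^ 2 * ‖proj (W i) g‖ ^ 2 := h2
        _ ≤ B₀ * D * ‖g‖ ^ 2 := by rw [mul_assoc]; exact l2
end

section
/- Let {(W_i, ω_i)}_{i∈I} be a fusion frame for H with bounds A, B, and let K ∈ B(H) have closed range with pseudo-inverse K†, such that W_i ⊆ R(K†) for all i. Then {(KW_i, ω_i)}_{i∈I} is a K-fusion frame for H (where KW_i denotes the closure of K(W_i) if necessary). -/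
open scoped InnerProductSpace
open ContinuousLinearMap (adjoint)

variable {H : Type*} [NormedAddCommGroup H] [InnerProductSpace ℂ H] [CompleteSpace H]
  [TopologicalSpace.SeparableSpace H]

lemma proj_apply (U : Submodule ℂ H) [U.HasOrthogonalProjection] (x : H) :
    proj U x = (U.orthogonalProjectionOnto x : H) := rfl

lemma sub_proj_mem_orthogonal (U : Submodule ℂ H) [U.HasOrthogonalProjection] (x : H) :
    x - proj U x ∈ Uᗮ := U.sub_starProjection_mem_orthogonal x

lemma proj_mem (U : Submodule ℂ H) [U.HasOrthogonalProjection] (x : H) :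
    proj U x ∈ U := (U.orthogonalProjectionOnto x).2

lemma proj_eq_of_sub_mem_orthogonal (U : Submodule ℂ H) [U.HasOrthogonalProjection]
    {a b : H} (h : a - b ∈ Uᗮ) : proj U a = proj U b := by
  have : proj U (a - b) = 0 := by
    simp [proj_apply, Submodule.orthogonalProjectionOnto_apply_of_mem_orthogonal h]
  rw [map_sub] at this
  exact sub_eq_zero.mp this

lemma norm_proj_le (U : Submodule ℂ H) [U.HasOrthogonalProjection] (x : H) :
    ‖proj U x‖ ≤ ‖x‖ := by
  have h1 : (⟪proj U x, x⟫_ℂ) = ⟪proj U x, proj U x⟫_ℂ := by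
    have := (U.mem_orthogonal _).mp (sub_proj_mem_orthogonal U x) _ (proj_mem U x)
    rw [inner_sub_right] at this
    linear_combination this
  have h2 : ‖proj U x‖ ^ 2 = ‖(⟪proj U x, x⟫_ℂ)‖ := by
    rw [h1, inner_self_eq_norm_sq_to_K]
    simp [sq_abs]
  nlinarith [norm_inner_le_norm (𝕜 := ℂ) (proj U x) x, norm_nonneg (proj U x), norm_nonneg x]

theorem image_fusion_frame_is_K_fusion_frame {ι : Type*} [Countable ι]
    (K Kd : H →L[ℂ] H) (hKclosed : IsClosed (LinearMap.range (K : H →ₗ[ℂ] H) : Set H))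
    (h1 : K ∘L Kd ∘L K = K) (h2 : Kd ∘L K ∘L Kd = Kd)
    (h3 : adjoint (K ∘L Kd) = K ∘L Kd) (h4 : adjoint (Kd ∘L K) = Kd ∘L K)
    (W KW : ι → Submodule ℂ H) [∀ i, CompleteSpace (W i)] [∀ i, CompleteSpace (KW i)]
    (ω : ι → ℝ) (hω : ∀ i, 0 < ω i) (A B : ℝ) (hA : 0 < A) (hB : 0 < B)
    (hfusion : ∀ f : H, A * ‖f‖ ^ 2 ≤ ∑' i, ω i ^ 2 * ‖proj (W i) f‖ ^ 2 ∧
      ∑' i, ω i ^ 2 * ‖proj (W i) f‖ ^ 2 ≤ B * ‖f‖ ^ 2)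
    (hsub : ∀ i, W i ≤ LinearMap.range (Kd : H →ₗ[ℂ] H))
    (hKW : ∀ i, KW i = ((W i).map (K : H →ₗ[ℂ] H)).topologicalClosure) :
    ∃ A' B' : ℝ, 0 < A' ∧ 0 < B' ∧ ∀ f : H,
      A' * ‖adjoint K f‖ ^ 2 ≤ ∑' i, ω i ^ 2 * ‖proj (KW i) f‖ ^ 2 ∧
      ∑' i, ω i ^ 2 * ‖proj (KW i) f‖ ^ 2 ≤ B' * ‖f‖ ^ 2 := by
  set CK : ℝ := ‖adjoint K‖ with hCK
  have hCK0 : 0 ≤ CK := norm_nonneg _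
  have hKd0 : (0:ℝ) ≤ ‖Kd‖ := norm_nonneg _
  -- membership: K w ∈ KW i for w ∈ W i
  have hmem : ∀ i, ∀ w ∈ W i, K w ∈ KW i := by
    intro i w hw
    rw [hKW i]
    exact Submodule.le_topologicalClosure _ (Submodule.mem_map_of_mem hw)
  -- key1 : ‖proj (W i) (adjoint K f)‖ ≤ CK * ‖proj (KW i) f‖
  have key1 : ∀ (i : ι) (f : H),
      ‖proj (W i) (adjoint K f)‖ ≤ CK * ‖proj (KW i) f‖ := by
    intro i f
    have heq : proj (W i) (adjoint K f) = proj (W i) (adjoint K (proj (KW i) f)) := by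
      apply proj_eq_of_sub_mem_orthogonal
      rw [← map_sub]
      rw [Submodule.mem_orthogonal]
      intro w hw
      rw [ContinuousLinearMap.adjoint_inner_right]
      exact (Submodule.mem_orthogonal _ _).mp
        (sub_proj_mem_orthogonal (KW i) f) _ (hmem i w hw)
    rw [heq]
    calc ‖proj (W i) (adjoint K (proj (KW i) f))‖
        ≤ ‖adjoint K (proj (KW i) f)‖ := norm_proj_le _ _
      _ ≤ CK * ‖proj (KW i) f‖ := (adjoint K).le_opNorm _
  -- key2 : ‖proj (KW i) f‖ ≤ ‖Kd‖ * ‖proj (W i) (adjoint K f)‖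
  have key2 : ∀ (i : ι) (f : H),
      ‖proj (KW i) f‖ ≤ ‖Kd‖ * ‖proj (W i) (adjoint K f)‖ := by
    intro i f
    set c : ℝ := ‖Kd‖ * ‖proj (W i) (adjoint K f)‖ with hc
    have hc0 : 0 ≤ c := mul_nonneg hKd0 (norm_nonneg _)
    have hclosed : IsClosed {u : H | ‖(⟪u, f⟫_ℂ)‖ ≤ c * ‖u‖} := by
      apply isClosed_le
      · exact (Continuous.inner continuous_id continuous_const).norm
      · exact continuous_const.mul continuous_norm
    have hsubset : ((W i).map (K : H →ₗ[ℂ] H) : Set H) ⊆ {u : H | ‖(⟪u, f⟫_ℂ)‖ ≤ c * ‖u‖} := by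
      rintro _ ⟨w, hw, rfl⟩
      have hwfix : Kd (K w) = w := by
        obtain ⟨x, hx⟩ := hsub i hw
        have := congrFun (congrArg DFunLike.coe h2) x
        simp only [ContinuousLinearMap.comp_apply] at this
        rw [← hx, ContinuousLinearMap.coe_coe, this]
      have hwnorm : ‖w‖ ≤ ‖Kd‖ * ‖K w‖ := by
        conv_lhs => rw [← hwfix]
        exact Kd.le_opNorm _
      have hinner : (⟪K w, f⟫_ℂ) = ⟪w, proj (W i) (adjoint K f)⟫_ℂ := by
        rw [← ContinuousLinearMap.adjoint_inner_right]
        have := (Submodule.mem_orthogonal _ _).mp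
          (sub_proj_mem_orthogonal (W i) (adjoint K f)) _ hw
        rw [inner_sub_right] at this
        linear_combination this
      simp only [Set.mem_setOf_eq, ContinuousLinearMap.coe_coe, hinner]
      calc ‖(⟪w, proj (W i) (adjoint K f)⟫_ℂ)‖
          ≤ ‖w‖ * ‖proj (W i) (adjoint K f)‖ := norm_inner_le_norm _ _
        _ ≤ (‖Kd‖ * ‖K w‖) * ‖proj (W i) (adjoint K f)‖ := by
            apply mul_le_mul_of_nonneg_right hwnorm (norm_nonneg _)
        _ = c * ‖K w‖ := by ring
    have hQmem : proj (KW i) f ∈ {u : H | ‖(⟪u, f⟫_ℂ)‖ ≤ c * ‖u‖} := by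
      have h5 : proj (KW i) f ∈ (KW i : Set H) := proj_mem _ _
      have hset : (KW i : Set H) = closure (((W i).map (K : H →ₗ[ℂ] H) : Submodule ℂ H) : Set H) := by
        rw [hKW i, Submodule.topologicalClosure_coe]
      rw [hset] at h5
      exact closure_minimal hsubset hclosed h5
    have hQ2 : ‖proj (KW i) f‖ ^ 2 ≤ c * ‖proj (KW i) f‖ := by
      have h7 : (⟪proj (KW i) f, f⟫_ℂ) = ⟪proj (KW i) f, proj (KW i) f⟫_ℂ := by
        have := (Submodule.mem_orthogonal (KW i) (f - proj (KW i) f)).mp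
          (sub_proj_mem_orthogonal (KW i) f) (proj (KW i) f) (proj_mem (KW i) f)
        rw [inner_sub_right] at this
        linear_combination this
      have h8 : ‖proj (KW i) f‖ ^ 2 = ‖(⟪proj (KW i) f, f⟫_ℂ)‖ := by
        rw [h7, inner_self_eq_norm_sq_to_K]
        simp [sq_abs]
      rw [h8]; exact hQmem
    nlinarith [norm_nonneg (proj (KW i) f), sq_nonneg (‖proj (KW i) f‖ - c)]
  -- summability of the W-side series
  have S1 : ∀ g : H, Summable (fun i => ω i ^ 2 * ‖proj (W i) g‖ ^ 2) := by
    intro g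
    by_contra hns
    have htz : ∑' i, ω i ^ 2 * ‖proj (W i) g‖ ^ 2 = 0 := tsum_eq_zero_of_not_summable hns
    have hlow := (hfusion g).1
    rw [htz] at hlow
    have hg0 : g = 0 := by
      have : ‖g‖ ^ 2 ≤ 0 := by nlinarith
      have : ‖g‖ = 0 := by nlinarith [norm_nonneg g]
      exact norm_eq_zero.mp this
    apply hns
    refine Summable.congr summable_zero fun i => ?_
    simp [hg0]
  refine ⟨A / (CK ^ 2 + 1), B * (‖Kd‖ ^ 2 * CK ^ 2 + 1), ?_, ?_, ?_⟩
  · positivity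
  · positivity
  intro f
  set g : H := adjoint K f with hg
  have hSW : Summable (fun i => ω i ^ 2 * ‖proj (W i) g‖ ^ 2) := S1 g
  have hterm2 : ∀ i, ω i ^ 2 * ‖proj (KW i) f‖ ^ 2
      ≤ ‖Kd‖ ^ 2 * (ω i ^ 2 * ‖proj (W i) g‖ ^ 2) := by
    intro i
    have hk := key2 i f
    have hsq : ‖proj (KW i) f‖ ^ 2 ≤ ‖Kd‖ ^ 2 * ‖proj (W i) g‖ ^ 2 := by
      nlinarith [hk, norm_nonneg (proj (KW i) f),
        mul_nonneg hKd0 (norm_nonneg (proj (W i) g))]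
    calc ω i ^ 2 * ‖proj (KW i) f‖ ^ 2
        ≤ ω i ^ 2 * (‖Kd‖ ^ 2 * ‖proj (W i) g‖ ^ 2) :=
          mul_le_mul_of_nonneg_left hsq (sq_nonneg _)
      _ = ‖Kd‖ ^ 2 * (ω i ^ 2 * ‖proj (W i) g‖ ^ 2) := by ring
  have hSKW : Summable (fun i => ω i ^ 2 * ‖proj (KW i) f‖ ^ 2) := by
    apply Summable.of_nonneg_of_le (fun i => by positivity) hterm2 (hSW.mul_left _)
  constructor
  · -- lower bound
    have hterm1 : ∀ i, ω i ^ 2 * ‖proj (W i) g‖ ^ 2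
        ≤ (CK ^ 2 + 1) * (ω i ^ 2 * ‖proj (KW i) f‖ ^ 2) := by
      intro i
      have hk := key1 i f
      have hsq : ‖proj (W i) g‖ ^ 2 ≤ CK ^ 2 * ‖proj (KW i) f‖ ^ 2 := by
        nlinarith [hk, norm_nonneg (proj (W i) g),
          mul_nonneg hCK0 (norm_nonneg (proj (KW i) f))]
      have hnn : 0 ≤ ω i ^ 2 * ‖proj (KW i) f‖ ^ 2 := by positivity
      calc ω i ^ 2 * ‖proj (W i) g‖ ^ 2
          ≤ ω i ^ 2 * (CK ^ 2 * ‖proj (KW i) f‖ ^ 2) :=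
            mul_le_mul_of_nonneg_left hsq (sq_nonneg _)
        _ = CK ^ 2 * (ω i ^ 2 * ‖proj (KW i) f‖ ^ 2) := by ring
        _ ≤ (CK ^ 2 + 1) * (ω i ^ 2 * ‖proj (KW i) f‖ ^ 2) := by nlinarith
    have hsum_le : ∑' i, ω i ^ 2 * ‖proj (W i) g‖ ^ 2
        ≤ (CK ^ 2 + 1) * ∑' i, ω i ^ 2 * ‖proj (KW i) f‖ ^ 2 := by
      rw [← tsum_mul_left]
      exact Summable.tsum_le_tsum hterm1 hSW (hSKW.mul_left _)
    have hlow := (hfusion g).1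
    rw [div_mul_eq_mul_div, div_le_iff₀ (by positivity)]
    calc A * ‖g‖ ^ 2 ≤ ∑' i, ω i ^ 2 * ‖proj (W i) g‖ ^ 2 := hlow
      _ ≤ (CK ^ 2 + 1) * ∑' i, ω i ^ 2 * ‖proj (KW i) f‖ ^ 2 := hsum_le
      _ = (∑' i, ω i ^ 2 * ‖proj (KW i) f‖ ^ 2) * (CK ^ 2 + 1) := by ring
  · -- upper bound
    have hsum_le : ∑' i, ω i ^ 2 * ‖proj (KW i) f‖ ^ 2
        ≤ ‖Kd‖ ^ 2 * ∑' i, ω i ^ 2 * ‖proj (W i) g‖ ^ 2 := by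
      rw [← tsum_mul_left]
      exact Summable.tsum_le_tsum hterm2 hSKW (hSW.mul_left _)
    have hup := (hfusion g).2
    have hgf : ‖g‖ ≤ CK * ‖f‖ := (adjoint K).le_opNorm f
    calc ∑' i, ω i ^ 2 * ‖proj (KW i) f‖ ^ 2
        ≤ ‖Kd‖ ^ 2 * ∑' i, ω i ^ 2 * ‖proj (W i) g‖ ^ 2 := hsum_le
      _ ≤ ‖Kd‖ ^ 2 * (B * ‖g‖ ^ 2) := by
          apply mul_le_mul_of_nonneg_left hup (by positivity)
      _ ≤ B * (‖Kd‖ ^ 2 * CK ^ 2 + 1) * ‖f‖ ^ 2 := by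
          have hsqg : ‖g‖ ^ 2 ≤ CK ^ 2 * ‖f‖ ^ 2 := by
            have h := mul_self_le_mul_self (norm_nonneg g) hgf
            calc ‖g‖ ^ 2 = ‖g‖ * ‖g‖ := sq ‖g‖
              _ ≤ (CK * ‖f‖) * (CK * ‖f‖) := h
              _ = CK ^ 2 * ‖f‖ ^ 2 := by ring
          calc ‖Kd‖ ^ 2 * (B * ‖g‖ ^ 2)
              ≤ ‖Kd‖ ^ 2 * (B * (CK ^ 2 * ‖f‖ ^ 2)) :=
                mul_le_mul_of_nonneg_left
                  (mul_le_mul_of_nonneg_left hsqg hB.le) (sq_nonneg _)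
            _ = B * (‖Kd‖ ^ 2 * CK ^ 2) * ‖f‖ ^ 2 := by ring
            _ ≤ B * (‖Kd‖ ^ 2 * CK ^ 2 + 1) * ‖f‖ ^ 2 :=
                mul_le_mul_of_nonneg_right
                  (mul_le_mul_of_nonneg_left (by linarith) hB.le) (sq_nonneg _)
end

section
/- Let W = {(W_i, ω_i)}_{i∈I} be a K-fusion frame for H, where K ∈ B(H) has closed range. Then every f ∈ H satisfies the reconstruction formula Kf = Σ_{i∈I} ω_i² π_{R(K)} π_{W_i} (S_W^{-1})* K f, where S_W^{-1} is the inverse of the frame operator S_W restricted to R(K) → S_W(R(K)). -/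
open scoped InnerProductSpace
open ContinuousLinearMap (adjoint)

variable {H : Type*} [NormedAddCommGroup H] [InnerProductSpace ℂ H] [CompleteSpace H]
  [TopologicalSpace.SeparableSpace H]

lemma proj_inner (U : Submodule ℂ H) [U.HasOrthogonalProjection] (x y : H) :
    ⟪proj U x, y⟫_ℂ = ⟪x, proj U y⟫_ℂ :=
  U.inner_starProjection_left_eq_right x y

lemma proj_eq_self (U : Submodule ℂ H) [U.HasOrthogonalProjection] {x : H} (hx : x ∈ U) :
    proj U x = x :=
  Submodule.starProjection_eq_self_iff.2 hx

theorem K_fusion_reconstruction {ι : Type*} [Countable ι]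
    (K S SWinv : H →L[ℂ] H) [CompleteSpace (LinearMap.range (K : H →ₗ[ℂ] H))]
    (W : ι → Submodule ℂ H) [∀ i, CompleteSpace (W i)]
    (ω : ι → ℝ) (hω : ∀ i, 0 < ω i) (A B : ℝ) (hA : 0 < A) (hB : 0 < B)
    (hfusion : ∀ f : H, A * ‖adjoint K f‖ ^ 2 ≤ ∑' i, ω i ^ 2 * ‖proj (W i) f‖ ^ 2 ∧
      ∑' i, ω i ^ 2 * ‖proj (W i) f‖ ^ 2 ≤ B * ‖f‖ ^ 2)
    (hS : ∀ f : H, HasSum (fun i => ω i ^ 2 • proj (W i) f) (S f))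
    (hinv1 : ∀ x ∈ LinearMap.range (K : H →ₗ[ℂ] H), SWinv (S x) = x) :
    ∀ f : H, HasSum (fun i => ω i ^ 2 •
      proj (LinearMap.range (K : H →ₗ[ℂ] H)) (proj (W i) (adjoint SWinv (K f)))) (K f) := by
  intro f
  set P : H →L[ℂ] H := proj (LinearMap.range (K : H →ₗ[ℂ] H)) with hP
  set g : H := adjoint SWinv (K f) with hg
  -- S is self-adjoint
  have hSsa : ∀ x y : H, ⟪S x, y⟫_ℂ = ⟪x, S y⟫_ℂ := by
    intro x y
    have h1 : HasSum (fun i => ⟪x, ω i ^ 2 • proj (W i) y⟫_ℂ) ⟪x, S y⟫_ℂ :=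
      (innerSL ℂ x).hasSum (hS y)
    have h2 : HasSum (fun i => star ⟪y, ω i ^ 2 • proj (W i) x⟫_ℂ)
        (star ⟪y, S x⟫_ℂ) := ((innerSL ℂ y).hasSum (hS x)).star
    have h3 : (fun i => star ⟪y, ω i ^ 2 • proj (W i) x⟫_ℂ)
        = fun i => ⟪x, ω i ^ 2 • proj (W i) y⟫_ℂ := by
      funext i
      simp only [← algebraMap_smul ℂ (ω i ^ 2), Complex.coe_algebraMap, inner_smul_left,
        inner_smul_right, Complex.conj_ofReal, star_mul', Complex.star_def, inner_conj_symm,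
        proj_inner]
    rw [h3] at h2
    have h4 : star ⟪y, S x⟫_ℂ = ⟪S x, y⟫_ℂ := inner_conj_symm _ _
    rw [← h4]
    exact h2.unique h1
  -- apply P to the sum for S g
  have hsum : HasSum (fun i => ω i ^ 2 • P (proj (W i) g)) (P (S g)) := by
    have h := P.hasSum (hS g)
    simpa using h
  have hPSg : P (S g) = K f := by
    apply ext_inner_left ℂ
    intro v
    rw [← proj_inner (LinearMap.range (K : H →ₗ[ℂ] H)) v (S g)]
    rw [← hSsa, hg, ContinuousLinearMap.adjoint_inner_right,
      hinv1 _ (proj_mem (LinearMap.range (K : H →ₗ[ℂ] H)) v),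
      proj_inner (LinearMap.range (K : H →ₗ[ℂ] H)) v (K f),
      proj_eq_self (LinearMap.range (K : H →ₗ[ℂ] H)) (x := K f) (LinearMap.mem_range_self (K : H →ₗ[ℂ] H) f)]
  rw [← hPSg]
  exact hsum
end
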